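/- If G is a Roelcke precompact topological group and H ≤ G is an open subgroup, then H (with the subspace topology) is Roelcke precompact. -/

import Mathlib

open Pointwise

/-- A topological group is Roelcke precompact if for every neighborhood `U` of the identity
there is a finite set `F` with `G = U F U`. -/
def RoelckePrecompact (G : Type*) [Group G] [TopologicalSpace G] : Prop :=
  ∀ U ∈ nhds (1 : G), ∃ F : Finset G, U * (F : Set G) * U = Set.univ

theorem roelckePrecompact_openSubgroup {G : Type*} [Group G] [TopologicalSpace G]
    [IsTopologicalGroup G] (hG : RoelckePrecompact G) (H : Subgroup G)
    (hH : IsOpen (H : Set G)) : RoelckePrecompact H := by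
  classical
  intro U hU
  -- U is a nhd in the subspace topology: get W ∈ nhds (1:G) with coe ⁻¹' W ⊆ U
  rw [nhds_induced] at hU
  obtain ⟨W, hW, hWU⟩ := hU
  -- V = W ∩ H is a nhd of 1 in G contained in H
  have hV : W ∩ (H : Set G) ∈ nhds (1 : G) :=
    Filter.inter_mem hW (hH.mem_nhds H.one_mem)
  obtain ⟨F, hF⟩ := hG _ hV
  refine ⟨F.subtype (· ∈ H), ?_⟩
  ext x
  simp only [Set.mem_univ, iff_true]
  have hx : (x : G) ∈ (W ∩ (H : Set G)) * (F : Set G) * (W ∩ (H : Set G)) := by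
    rw [hF]; trivial
  obtain ⟨y, hy, v2, hv2, hyx⟩ := hx
  obtain ⟨v1, hv1, f, hf, hy'⟩ := hy
  have hfH : f ∈ H := by
    have : f = v1⁻¹ * (x : G) * v2⁻¹ := by
      simp only at hyx hy'
      rw [← hyx, ← hy']; group
    rw [this]
    exact H.mul_mem (H.mul_mem (H.inv_mem hv1.2) x.2) (H.inv_mem hv2.2)
  refine ⟨⟨v1, hv1.2⟩ * ⟨f, hfH⟩, ⟨⟨v1, hv1.2⟩, hWU hv1.1, ⟨f, hfH⟩, ?_, rfl⟩,
    ⟨v2, hv2.2⟩, hWU hv2.1, ?_⟩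
  · simpa using hf
  · ext
    simp only at hyx hy'
    simp [← hyx, ← hy']
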